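/- Let Ξ ⊆ ℝ^n_+ be a nonempty convex, closed, and bounded set, let ξ̂_1,…,ξ̂_N ∈ Ξ, let q ∈ [1,∞], ε > 0, let l ∈ {1,…,N} and α ∈ ((l−1)/N, l/N]. Let ξ̄ ∈ Ξ maximize 1ᵀξ over ξ ∈ Ξ, and let c ≥ 1 satisfy ‖ξ̄ − ξ̂_i‖_q ≤ c ε N / l for all i ∈ {1,…,N}. Define ξ'_i = ξ̂_i + (ξ̄ − ξ̂_i)/c for i ∈ {1,…,N}, and let ζ ∈ ℝ^n be given by ζ_j = max_{ξ ∈ Ξ} ξ_j. Let X ⊆ {0,1}^n be nonempty and finite, suppose x' ∈ X minimizes x ↦ CVaR^α(ξ'_1ᵀx,…,ξ'_Nᵀx) over X, and suppose ζᵀx' ≤ b · ξ̄ᵀx' for some constant b ≥ 1. Then x' is a (b·c)-approximate solution to the Wasserstein distributionally robust problem: for every x ∈ X, the maximum over (ξ_1,…,ξ_N) ∈ Ξ^N with Σ_{i=1}^N ‖ξ_i − ξ̂_i‖_q ≤ Nε of CVaR^α(ξ_1ᵀx',…,ξ_Nᵀx') is at most b·c times the maximum over the same set of CVaR^α(ξ_1ᵀx,…,ξ_Nᵀx).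 -/

import Mathlib

open scoped BigOperators ENNReal

/-- Conditional Value at Risk of the values `c 1, …, c N` at risk level `α`:
`CVaR^α(c) = inf_{t ∈ ℝ} ( t + (1/(α N)) Σ_i max(c i − t, 0) )`. -/
noncomputable def cvar (N : ℕ) (α : ℝ) (c : Fin N → ℝ) : ℝ :=
  ⨅ t : ℝ, (t + 1 / (α * N) * ∑ i, max (c i - t) 0)

/-- The `q`-norm on `ℝ^n`, for an exponent `q ∈ [1,∞]` (represented as `ℝ≥0∞`). -/
noncomputable def qnorm {n : ℕ} (q : ℝ≥0∞) (v : Fin n → ℝ) : ℝ :=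
  if q = ⊤ then ⨆ i, |v i| else (∑ i, |v i| ^ q.toReal) ^ (1 / q.toReal)


lemma cvar_f_lb {N : ℕ} (hN : 0 < N) {α m t : ℝ} (hα0 : 0 < α) (hα1 : α ≤ 1)
    {cc : Fin N → ℝ} (hm : ∀ i, m ≤ cc i) :
    m ≤ t + 1 / (α * N) * ∑ i, max (cc i - t) 0 := by
  have hNR : (0:ℝ) < N := by exact_mod_cast hN
  have hA : (0:ℝ) < α * N := by positivity
  have hA1 : (0:ℝ) ≤ 1 / (α * N) := by positivity
  rcases le_or_gt m t with h | h
  · have h0 : (0:ℝ) ≤ ∑ i, max (cc i - t) 0 :=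
      Finset.sum_nonneg fun i _ => le_max_right _ _
    nlinarith
  · have hsum : (N : ℝ) * (m - t) ≤ ∑ i, max (cc i - t) 0 := by
      calc (N : ℝ) * (m - t) = ∑ _i : Fin N, (m - t) := by
              simp [Finset.sum_const, Finset.card_univ, mul_comm]; ring
        _ ≤ ∑ i, max (cc i - t) 0 := by
              refine Finset.sum_le_sum fun i _ => ?_
              have := hm i; exact le_max_of_le_left (by linarith)
    have heq : 1 / (α * N) * ((N : ℝ) * (m - t)) = (m - t) / α := by
      field_simp
    have h2 : (m - t) ≤ (m - t) / α := by
      rw [le_div_iff₀ hα0]; nlinarith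
    have h3 : 1 / (α * N) * ((N : ℝ) * (m - t)) ≤ 1 / (α * N) * ∑ i, max (cc i - t) 0 :=
      mul_le_mul_of_nonneg_left hsum hA1
    rw [heq] at h3
    linarith

lemma cvar_bddBelow {N : ℕ} (hN : 0 < N) {α : ℝ} (hα0 : 0 < α) (hα1 : α ≤ 1)
    (cc : Fin N → ℝ) :
    BddBelow (Set.range fun t : ℝ => t + 1 / (α * N) * ∑ i, max (cc i - t) 0) := by
  have : Nonempty (Fin N) := ⟨⟨0, hN⟩⟩
  refine ⟨Finset.univ.inf' Finset.univ_nonempty cc, ?_⟩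
  rintro _ ⟨t, rfl⟩
  exact cvar_f_lb hN hα0 hα1 fun i => Finset.inf'_le _ (Finset.mem_univ i)

lemma le_cvar {N : ℕ} (hN : 0 < N) {α m : ℝ} (hα0 : 0 < α) (hα1 : α ≤ 1)
    {cc : Fin N → ℝ} (hm : ∀ i, m ≤ cc i) : m ≤ cvar N α cc :=
  le_ciInf fun t => cvar_f_lb hN hα0 hα1 hm

lemma cvar_le {N : ℕ} (hN : 0 < N) {α M : ℝ} (hα0 : 0 < α) (hα1 : α ≤ 1)
    {cc : Fin N → ℝ} (hM : ∀ i, cc i ≤ M) : cvar N α cc ≤ M := by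
  have hz : ∑ i, max (cc i - M) 0 = 0 := by
    refine Finset.sum_eq_zero fun i _ => ?_
    exact max_eq_right (by have := hM i; linarith)
  have h : cvar N α cc ≤ M + 1 / (α * N) * ∑ i, max (cc i - M) 0 :=
    ciInf_le (cvar_bddBelow hN hα0 hα1 cc) M
  rw [hz, mul_zero, add_zero] at h; exact h

lemma cvar_key {N l : ℕ} {α : ℝ} (hN : 0 < N) (hα0 : 0 < α) (hα1 : α ≤ 1)
    (hαl : α * N ≤ l)
    (v w : Fin N → ℝ) (S : Finset (Fin N)) (hScard : S.card = l)
    (hw : ∀ i ∈ S, w i = v i) (τ : ℝ) (hτS : ∀ i ∈ S, τ ≤ v i)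
    (hτout : ∀ i ∉ S, v i ≤ τ) :
    cvar N α v ≤ cvar N α w := by
  have hNR : (0:ℝ) < N := by exact_mod_cast hN
  have hA : (0:ℝ) < α * N := by positivity
  have hA1 : (0:ℝ) ≤ 1 / (α * N) := by positivity
  have hbdd := cvar_bddBelow hN hα0 hα1 v
  -- f s cc = s + 1/(αN) Σ max (cc i - s) 0
  have hstep : ∀ s : ℝ, (∀ i ∉ S, v i ≤ s) →
      ∑ i, max (v i - s) 0 ≤ ∑ i, max (w i - s) 0 := by
    intro s hs
    refine Finset.sum_le_sum fun i _ => ?_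
    by_cases hi : i ∈ S
    · rw [hw i hi]
    · have h1 : max (v i - s) 0 = 0 := max_eq_right (by have := hs i hi; linarith)
      rw [h1]; exact le_max_right _ _
  refine le_ciInf fun t => ?_
  rcases le_or_gt τ t with ht | ht
  · have h1 : cvar N α v ≤ t + 1 / (α * N) * ∑ i, max (v i - t) 0 := ciInf_le hbdd t
    have h2 := hstep t (fun i hi => le_trans (hτout i hi) ht)
    have := mul_le_mul_of_nonneg_left h2 hA1
    linarith
  · have h1 : cvar N α v ≤ τ + 1 / (α * N) * ∑ i, max (v i - τ) 0 := ciInf_le hbdd τ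
    have h2 := hstep τ (fun i hi => hτout i hi)
    -- now show  τ + 1/(αN) Σ max (w i - τ) 0 ≤ t + 1/(αN) Σ max (w i - t) 0
    have h3 : ∑ i, max (w i - τ) 0 + (l:ℝ) * (τ - t) ≤ ∑ i, max (w i - t) 0 := by
      have hsplitτ : ∑ i ∈ S, max (w i - τ) 0 + ∑ i ∈ Sᶜ, max (w i - τ) 0
          = ∑ i, max (w i - τ) 0 := Finset.sum_add_sum_compl S _
      have hsplitt : ∑ i ∈ S, max (w i - t) 0 + ∑ i ∈ Sᶜ, max (w i - t) 0
          = ∑ i, max (w i - t) 0 := Finset.sum_add_sum_compl S _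
      have hin : ∑ i ∈ S, (max (w i - τ) 0 + (τ - t)) ≤ ∑ i ∈ S, max (w i - t) 0 := by
        refine Finset.sum_le_sum fun i hi => ?_
        have hvi := hτS i hi
        rw [hw i hi, max_eq_left (by linarith), max_eq_left (by linarith)]
        linarith
      have hin' : ∑ i ∈ S, (max (w i - τ) 0 + (τ - t))
          = ∑ i ∈ S, max (w i - τ) 0 + (l:ℝ) * (τ - t) := by
        rw [Finset.sum_add_distrib, Finset.sum_const, hScard, nsmul_eq_mul]
      have hout : ∑ i ∈ Sᶜ, max (w i - τ) 0 ≤ ∑ i ∈ Sᶜ, max (w i - t) 0 := by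
        refine Finset.sum_le_sum fun i _ => ?_
        exact max_le_max (by linarith) le_rfl
      linarith
    have h4 : τ + 1 / (α * N) * ∑ i, max (w i - τ) 0
        ≤ t + 1 / (α * N) * ∑ i, max (w i - t) 0 := by
      have hml : 1 / (α * N) * ((l:ℝ) * (τ - t)) ≥ τ - t := by
        rw [ge_iff_le, one_div, ← div_eq_inv_mul, le_div_iff₀ hA]
        nlinarith
      have := mul_le_mul_of_nonneg_left h3 hA1
      rw [mul_add] at this
      linarith
    have := mul_le_mul_of_nonneg_left h2 hA1
    linarith

lemma qnorm_zero {n : ℕ} {q : ℝ≥0∞} (hq : 1 ≤ q) :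
    qnorm q (fun _ : Fin n => (0:ℝ)) = 0 := by
  unfold qnorm
  split_ifs with h
  · simp
  · have hp : 1 ≤ q.toReal := by
      have := ENNReal.toReal_mono h hq
      simpa using this
    have hp0 : q.toReal ≠ 0 := by linarith
    simp [Real.zero_rpow hp0, Real.zero_rpow (inv_ne_zero hp0)]

lemma qnorm_div {n : ℕ} {q : ℝ≥0∞} (hq : 1 ≤ q) (v : Fin n → ℝ) {c : ℝ} (hc : 0 < c) :
    qnorm q (fun j => v j / c) = qnorm q v / c := by
  unfold qnorm
  split_ifs with h
  · rcases Nat.eq_zero_or_pos n with hn | hn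
    · subst hn
      rw [Real.iSup_of_isEmpty, Real.iSup_of_isEmpty, zero_div]
    · have : Nonempty (Fin n) := ⟨⟨0, hn⟩⟩
      have h1 : ∀ j : Fin n, |v j / c| = |v j| / c := fun j => by
        rw [abs_div, abs_of_pos hc]
      simp_rw [h1, div_eq_inv_mul]
      exact (Real.mul_iSup_of_nonneg (by positivity) _).symm
  · have hp : 1 ≤ q.toReal := by
      have := ENNReal.toReal_mono h hq
      simpa using this
    have hp0 : (0:ℝ) < q.toReal := by linarith
    have h1 : ∀ j : Fin n, |v j / c| ^ q.toReal = |v j| ^ q.toReal / c ^ q.toReal :=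
      fun j => by rw [abs_div, abs_of_pos hc, Real.div_rpow (abs_nonneg _) hc.le]
    simp_rw [h1, ← Finset.sum_div]
    rw [Real.div_rpow (Finset.sum_nonneg fun j _ => Real.rpow_nonneg (abs_nonneg _) _)
      (Real.rpow_nonneg hc.le _)]
    congr 1
    rw [← Real.rpow_mul hc.le, mul_one_div_cancel hp0.ne', Real.rpow_one]

/-- Approximation guarantee for the distorted-sample algorithm over a general convex,
closed, bounded support set `Ξ ⊆ ℝ^n_+`.  With `ξ̄` maximizing `1ᵀξ` over `Ξ`, `c ≥ 1` with
`‖ξ̄ − ξ̂_i‖_q ≤ cεN/l`, distorted sample `ξ'_i = ξ̂_i + (ξ̄ − ξ̂_i)/c`, `ζ_j = max_{ξ∈Ξ} ξ_j`: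
if `x' ∈ X` minimizes the CVaR of the distorted sample over `X` and `ζᵀx' ≤ b·ξ̄ᵀx'` with
`b ≥ 1`, then for every `x ∈ X` the worst-case CVaR of `x'` over the ambiguity set is at
most `b·c` times the worst-case CVaR of `x`. -/
theorem stmt_10 (n N : ℕ) (hN : 0 < N)
    (Ξ : Set (Fin n → ℝ)) (hΞne : Ξ.Nonempty) (hconv : Convex ℝ Ξ) (hcl : IsClosed Ξ)
    (hbd : Bornology.IsBounded Ξ) (hpos : ∀ ξ ∈ Ξ, ∀ j, 0 ≤ ξ j)
    (ξh : Fin N → Fin n → ℝ) (hξh : ∀ i, ξh i ∈ Ξ)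
    (q : ℝ≥0∞) (hq : 1 ≤ q) (ε : ℝ) (hε : 0 < ε)
    (l : ℕ) (hl1 : 1 ≤ l) (hlN : l ≤ N)
    (α : ℝ) (hαl : ((l : ℝ) - 1) / N < α) (hαu : α ≤ (l : ℝ) / N)
    (ξbar : Fin n → ℝ) (hξbar : ξbar ∈ Ξ)
    (hbarmax : ∀ ξ ∈ Ξ, (∑ j, ξ j) ≤ ∑ j, ξbar j)
    (c : ℝ) (hc : 1 ≤ c)
    (hcbound : ∀ i, qnorm q (fun j => ξbar j - ξh i j) ≤ c * ε * N / l)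
    (ζ : Fin n → ℝ) (hζ : ∀ j, IsGreatest {t : ℝ | ∃ ξ ∈ Ξ, ξ j = t} (ζ j))
    (X : Finset (Fin n → ℝ)) (hXne : X.Nonempty)
    (hXbin : ∀ x ∈ X, ∀ j, x j = 0 ∨ x j = 1)
    (x' : Fin n → ℝ) (hx' : x' ∈ X)
    (hopt : ∀ x ∈ X,
      cvar N α (fun i => ∑ j, (ξh i j + (ξbar j - ξh i j) / c) * x' j) ≤
        cvar N α (fun i => ∑ j, (ξh i j + (ξbar j - ξh i j) / c) * x j))
    (b : ℝ) (hb : 1 ≤ b) (hζx' : (∑ j, ζ j * x' j) ≤ b * ∑ j, ξbar j * x' j) :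
    ∀ x ∈ X,
      sSup {y : ℝ | ∃ ξ : Fin N → Fin n → ℝ, (∀ i, ξ i ∈ Ξ) ∧
          (∑ i, qnorm q (fun j => ξ i j - ξh i j)) ≤ N * ε ∧
          y = cvar N α (fun i => ∑ j, ξ i j * x' j)} ≤
        b * c * sSup {y : ℝ | ∃ ξ : Fin N → Fin n → ℝ, (∀ i, ξ i ∈ Ξ) ∧
          (∑ i, qnorm q (fun j => ξ i j - ξh i j)) ≤ N * ε ∧
          y = cvar N α (fun i => ∑ j, ξ i j * x j)} := by
  intro x hx
  have hNR : (0:ℝ) < N := by exact_mod_cast hN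
  have hlR : (0:ℝ) < l := by exact_mod_cast hl1
  have hlR1 : (1:ℝ) ≤ l := by exact_mod_cast hl1
  have hlRN : (l:ℝ) ≤ N := by exact_mod_cast hlN
  have hc0 : (0:ℝ) < c := lt_of_lt_of_le one_pos hc
  have hα0 : 0 < α := lt_of_le_of_lt (div_nonneg (by linarith) hNR.le) hαl
  have hα1 : α ≤ 1 := hαu.trans (by rw [div_le_one hNR]; exact hlRN)
  have hαlN : α * N ≤ l := (le_div_iff₀ hNR).mp hαu
  have hx0 : ∀ j, 0 ≤ x j := fun j => by
    rcases hXbin x hx j with h | h <;> rw [h] <;> norm_num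
  have hx'0 : ∀ j, 0 ≤ x' j := fun j => by
    rcases hXbin x' hx' j with h | h <;> rw [h] <;> norm_num
  have hinvc : 1 / c ≤ 1 := by rw [div_le_one hc0]; exact hc
  -- lower bound on the CVaR of the distorted sample at x'
  have hB : (∑ j, ξbar j * x' j) / c ≤
      cvar N α (fun i => ∑ j, (ξh i j + (ξbar j - ξh i j) / c) * x' j) := by
    refine le_cvar hN hα0 hα1 fun i => ?_
    rw [Finset.sum_div]
    refine Finset.sum_le_sum fun j _ => ?_
    have h1 : 0 ≤ ξh i j := hpos _ (hξh i) j
    have h2 : 0 ≤ x' j := hx'0 j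
    have h3 : ξbar j / c ≤ ξh i j + (ξbar j - ξh i j) / c := by
      have e : ξh i j + (ξbar j - ξh i j) / c - ξbar j / c = ξh i j * (1 - 1 / c) := by
        field_simp
        ring
      nlinarith [mul_nonneg h1 (by linarith : (0:ℝ) ≤ 1 - 1/c)]
    calc ξbar j * x' j / c = (ξbar j / c) * x' j := by ring
      _ ≤ (ξh i j + (ξbar j - ξh i j) / c) * x' j := mul_le_mul_of_nonneg_right h3 h2
  have hξbx'0 : 0 ≤ ∑ j, ξbar j * x' j :=
    Finset.sum_nonneg fun j _ => mul_nonneg (hpos _ hξbar j) (hx'0 j)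
  -- upper bound on the left-hand side
  have h₁ : sSup {y : ℝ | ∃ ξ : Fin N → Fin n → ℝ, (∀ i, ξ i ∈ Ξ) ∧
      (∑ i, qnorm q (fun j => ξ i j - ξh i j)) ≤ N * ε ∧
      y = cvar N α (fun i => ∑ j, ξ i j * x' j)} ≤ b * ∑ j, ξbar j * x' j := by
    refine Real.sSup_le ?_ (mul_nonneg (by linarith) hξbx'0)
    rintro y ⟨ξ, hmem, -, rfl⟩
    have h1 : cvar N α (fun i => ∑ j, ξ i j * x' j) ≤ ∑ j, ζ j * x' j :=
      cvar_le hN hα0 hα1 fun i => Finset.sum_le_sum fun j _ =>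
        mul_le_mul_of_nonneg_right ((hζ j).2 ⟨ξ i, hmem i, rfl⟩) (hx'0 j)
    exact h1.trans hζx'
  -- choose the top-l index set S for the distorted values at x
  set vx : Fin N → ℝ := fun i => ∑ j, (ξh i j + (ξbar j - ξh i j) / c) * x j with hvx
  obtain ⟨S, hSmem, hSmax⟩ := Finset.exists_max_image
    ((Finset.univ : Finset (Fin N)).powersetCard l) (fun T => ∑ i ∈ T, vx i)
    (Finset.powersetCard_nonempty.mpr (by simpa using hlN))
  obtain ⟨-, hScard⟩ := Finset.mem_powersetCard.mp hSmem
  have hSne : S.Nonempty := Finset.card_pos.mp (by omega)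
  obtain ⟨i₀, hi₀, hi₀min⟩ := Finset.exists_min_image S vx hSne
  have houtS : ∀ i ∉ S, vx i ≤ vx i₀ := by
    intro i hi
    by_contra hlt
    push_neg at hlt
    have hiE : i ∉ S.erase i₀ := fun h => hi (Finset.mem_of_mem_erase h)
    have hcard' : (insert i (S.erase i₀)).card = l := by
      rw [Finset.card_insert_of_notMem hiE, Finset.card_erase_of_mem hi₀, hScard]
      omega
    have hmem' : insert i (S.erase i₀) ∈
        (Finset.univ : Finset (Fin N)).powersetCard l :=
      Finset.mem_powersetCard.mpr ⟨Finset.subset_univ _, hcard'⟩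
    have h := hSmax _ hmem'
    rw [Finset.sum_insert hiE, Finset.sum_erase_eq_sub hi₀] at h
    linarith
  -- the distorted-on-S sample
  set ξw : Fin N → Fin n → ℝ :=
    fun i j => if i ∈ S then ξh i j + (ξbar j - ξh i j) / c else ξh i j with hξw
  have hξ'mem : ∀ i, (fun j => ξh i j + (ξbar j - ξh i j) / c) ∈ Ξ := by
    intro i
    have h := hconv (hξh i) hξbar (by linarith : (0:ℝ) ≤ 1 - 1/c)
      (by positivity : (0:ℝ) ≤ 1/c) (by ring)
    have e : (fun j => ξh i j + (ξbar j - ξh i j) / c)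
        = (1 - 1/c) • ξh i + (1/c) • ξbar := by
      funext j
      simp only [Pi.add_apply, Pi.smul_apply, smul_eq_mul]
      field_simp
      ring
    rw [e]; exact h
  have hξwmem : ∀ i, ξw i ∈ Ξ := by
    intro i
    by_cases hi : i ∈ S
    · have : ξw i = fun j => ξh i j + (ξbar j - ξh i j) / c := by
        funext j; simp [hξw, hi]
      rw [this]; exact hξ'mem i
    · have : ξw i = ξh i := by funext j; simp [hξw, hi]
      rw [this]; exact hξh i
  have hfeasw : ∑ i, qnorm q (fun j => ξw i j - ξh i j) ≤ N * ε := by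
    have hterm : ∀ i, qnorm q (fun j => ξw i j - ξh i j)
        = if i ∈ S then qnorm q (fun j => (ξbar j - ξh i j) / c) else 0 := by
      intro i
      by_cases hi : i ∈ S
      · rw [if_pos hi]
        congr 1
        funext j
        simp only [hξw, if_pos hi]
        ring
      · rw [if_neg hi]
        have : (fun j => ξw i j - ξh i j) = fun _ : Fin n => (0:ℝ) := by
          funext j; simp [hξw, hi]
        rw [this, qnorm_zero hq]
    calc ∑ i, qnorm q (fun j => ξw i j - ξh i j)
        ≤ ∑ i : Fin N, (if i ∈ S then ε * N / l else 0) := by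
          refine Finset.sum_le_sum fun i _ => ?_
          rw [hterm i]
          by_cases hi : i ∈ S
          · rw [if_pos hi, if_pos hi, qnorm_div hq _ hc0, div_le_iff₀ hc0]
            have h := hcbound i
            have e : c * ε * ↑N / ↑l = ε * ↑N / ↑l * c := by ring
            linarith [e ▸ h]
          · rw [if_neg hi, if_neg hi]
      _ = (l : ℝ) * (ε * N / l) := by
          rw [Finset.sum_ite_mem, Finset.univ_inter, Finset.sum_const, hScard,
            nsmul_eq_mul]
      _ = N * ε := by field_simp
  -- values of the distorted-on-S sample
  have hkey : cvar N α vx ≤ cvar N α (fun i => ∑ j, ξw i j * x j) := by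
    refine cvar_key hN hα0 hα1 hαlN vx (fun i => ∑ j, ξw i j * x j) S hScard
      (fun i hi => ?_) (vx i₀) (fun i hi => hi₀min i hi) houtS
    refine Finset.sum_congr rfl fun j _ => ?_
    simp [hξw, hi]
  -- the right-hand side sup is bounded above and contains the key value
  have hbddR : BddAbove {y : ℝ | ∃ ξ : Fin N → Fin n → ℝ, (∀ i, ξ i ∈ Ξ) ∧
      (∑ i, qnorm q (fun j => ξ i j - ξh i j)) ≤ N * ε ∧
      y = cvar N α (fun i => ∑ j, ξ i j * x j)} := by
    refine ⟨∑ j, ζ j * x j, ?_⟩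
    rintro y ⟨ξ, hmem, -, rfl⟩
    exact cvar_le hN hα0 hα1 fun i => Finset.sum_le_sum fun j _ =>
      mul_le_mul_of_nonneg_right ((hζ j).2 ⟨ξ i, hmem i, rfl⟩) (hx0 j)
  have h₅ : cvar N α (fun i => ∑ j, ξw i j * x j) ≤
      sSup {y : ℝ | ∃ ξ : Fin N → Fin n → ℝ, (∀ i, ξ i ∈ Ξ) ∧
        (∑ i, qnorm q (fun j => ξ i j - ξh i j)) ≤ N * ε ∧
        y = cvar N α (fun i => ∑ j, ξ i j * x j)} :=
    le_csSup hbddR ⟨ξw, hξwmem, hfeasw, rfl⟩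
  -- assemble
  have h₂ : cvar N α (fun i => ∑ j, (ξh i j + (ξbar j - ξh i j) / c) * x' j) ≤
      sSup {y : ℝ | ∃ ξ : Fin N → Fin n → ℝ, (∀ i, ξ i ∈ Ξ) ∧
        (∑ i, qnorm q (fun j => ξ i j - ξh i j)) ≤ N * ε ∧
        y = cvar N α (fun i => ∑ j, ξ i j * x j)} :=
    ((hopt x hx).trans hkey).trans h₅
  have hbc : (0:ℝ) ≤ b * c := mul_nonneg (by linarith) hc0.le
  calc sSup _ ≤ b * ∑ j, ξbar j * x' j := h₁
    _ = b * c * ((∑ j, ξbar j * x' j) / c) := by field_simp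
    _ ≤ b * c * cvar N α (fun i => ∑ j, (ξh i j + (ξbar j - ξh i j) / c) * x' j) :=
        mul_le_mul_of_nonneg_left hB hbc
    _ ≤ b * c * sSup _ := mul_le_mul_of_nonneg_left h₂ hbc
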